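/- arXiv:1912.12415 — 3 statements merged into one kernel-verified Lean document; each statement's English description precedes it below -/
import Mathlib

section
/- Let G be a group such that x ⊗ x = 1_⊗ for all x ∈ G. If α is a tensor commuting automorphism of G, then αⁿ is a tensor commuting automorphism of G for every integer n ≥ 0; that is, A^⊗(G) is closed under taking nonnegative powers. -/
/-!
Non-abelian tensor square `G ⊗ G`, constructed as the presented group on
symbols `g ⊗ h` with the defining relations
`g*g' ⊗ h = (g^{g'} ⊗ h^{g'}) * (g' ⊗ h)` and
`g ⊗ h*h' = (g ⊗ h') * (g^{h'} ⊗ h^{h'})`, where `a ^ b = b⁻¹ * a * b`.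
-/

variable {G : Type*} [Group G]

/-- Defining relations of the non-abelian tensor square `G ⊗ G`. -/
def tensorRels (G : Type*) [Group G] : Set (FreeGroup (G × G)) :=
  {r | (∃ g g' h : G,
      r = FreeGroup.of (g * g', h) *
        (FreeGroup.of (g'⁻¹ * g * g', g'⁻¹ * h * g') * FreeGroup.of (g', h))⁻¹) ∨
    (∃ g h h' : G,
      r = FreeGroup.of (g, h * h') *
        (FreeGroup.of (g, h') * FreeGroup.of (h'⁻¹ * g * h', h'⁻¹ * h * h'))⁻¹)}

/-- The non-abelian tensor square `G ⊗ G`. -/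
abbrev TensorSquare (G : Type*) [Group G] := PresentedGroup (tensorRels G)

/-- The tensor `g ⊗ h` as an element of `G ⊗ G`. -/
def tmul (g h : G) : TensorSquare G := PresentedGroup.of (g, h)

theorem tensorRels_eq_one {r : FreeGroup (G × G)} (hr : r ∈ tensorRels G) :
    PresentedGroup.mk (tensorRels G) r = 1 :=
  (QuotientGroup.eq_one_iff r).mpr (Subgroup.subset_normalClosure hr)

/-- The first defining relation of `G ⊗ G`. -/
theorem tmul_rel₁ (g g' h : G) :
    tmul (g * g') h = tmul (g'⁻¹ * g * g') (g'⁻¹ * h * g') * tmul g' h := by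
  have h1 := tensorRels_eq_one (G := G) (Or.inl ⟨g, g', h, rfl⟩)
  rw [map_mul, map_inv, map_mul, mul_inv_eq_one] at h1
  exact h1

/-- The second defining relation of `G ⊗ G`. -/
theorem tmul_rel₂ (g h h' : G) :
    tmul g (h * h') = tmul g h' * tmul (h'⁻¹ * g * h') (h'⁻¹ * h * h') := by
  have h1 := tensorRels_eq_one (G := G) (Or.inr ⟨g, h, h', rfl⟩)
  rw [map_mul, map_inv, map_mul, mul_inv_eq_one] at h1
  exact h1

/-- The action of `x : G` on `G ⊗ G`, determined by `(g ⊗ h) ^ x = (x⁻¹*g*x) ⊗ (x⁻¹*h*x)`. -/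
def tensorAct (x : G) : TensorSquare G →* TensorSquare G :=
  PresentedGroup.toGroup
    (f := fun p : G × G => tmul (x⁻¹ * p.1 * x) (x⁻¹ * p.2 * x))
    (by
      rintro r (⟨g, g', h, rfl⟩ | ⟨g, h, h', rfl⟩) <;>
        simp only [map_mul, map_inv, FreeGroup.lift_apply_of, mul_inv_eq_one]
      · have := tmul_rel₁ (x⁻¹ * g * x) (x⁻¹ * g' * x) (x⁻¹ * h * x)
        convert this using 2 <;> group
      · have := tmul_rel₂ (x⁻¹ * g * x) (x⁻¹ * h * x) (x⁻¹ * h' * x)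
        convert this using 2 <;> group)

@[simp] theorem tensorAct_tmul (x g h : G) :
    tensorAct x (tmul g h) = tmul (x⁻¹ * g * x) (x⁻¹ * h * x) :=
  PresentedGroup.toGroup.of _

/-- An automorphism `α` of `G` is tensor commuting if `g ⊗ α g = 1` for all `g`. -/
def IsTensorCommuting (α : G ≃* G) : Prop := ∀ g : G, tmul g (α g) = 1

/-- An automorphism `α` of `G` is tensor central if `[x, α] = x⁻¹ * α x` lies in the
tensor center of `G`, i.e. `(x⁻¹ * α x) ⊗ y = 1` for all `x y`. -/
def IsTensorCentral (α : G ≃* G) : Prop := ∀ x y : G, tmul (x⁻¹ * α x) y = 1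

/-- The inner automorphism `T_g : x ↦ x ^ g = g⁻¹ * x * g` of `G` induced by `g`. -/
def innerAut (g : G) : G ≃* G := MulAut.conj g⁻¹

/-- The action of `G` on the tensor square composes: acting by `a` then `b`
is the same as acting by `a * b`. -/
theorem tensorAct_tensorAct (a b : G) (u : TensorSquare G) :
    tensorAct b (tensorAct a u) = tensorAct (a * b) u := by
  have h : (tensorAct b).comp (tensorAct a) = tensorAct (a * b : G) := by
    apply PresentedGroup.ext
    rintro ⟨g, h⟩
    show tensorAct b (tensorAct a (tmul g h)) = tensorAct (a * b) (tmul g h)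
    simp only [tensorAct_tmul, mul_inv_rev]
    congr 1 <;> group
  exact DFunLike.congr_fun h u

/-- Acting by `1` is the identity. -/
theorem tensorAct_one_apply (u : TensorSquare G) : tensorAct (1 : G) u = u := by
  have h : tensorAct (1 : G) = MonoidHom.id (TensorSquare G) := by
    apply PresentedGroup.ext
    rintro ⟨g, h⟩
    show tensorAct (1 : G) (tmul g h) = tmul g h
    simp [tensorAct_tmul]
  rw [h]; rfl

/-- The action of `G` on the tensor square is injective on the trivial element. -/
theorem tensorAct_eq_one {a : G} {u : TensorSquare G} (h : tensorAct a u = 1) : u = 1 := by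
  have h2 := congrArg (tensorAct a⁻¹) h
  rw [tensorAct_tensorAct, map_one, mul_inv_cancel, tensorAct_one_apply] at h2
  exact h2

/-- The fundamental identity for a tensor commuting automorphism, obtained by
expanding `1 = (x*y) ⊗ α (x*y)`:
`(x ⊗ α y) ^ y * (y ⊗ α x) ^ (α y) = 1`. -/
theorem key_identity (α : G ≃* G) (hα : IsTensorCommuting α) (x y : G) :
    tensorAct y (tmul x (α y)) * tensorAct (α y) (tmul y (α x)) = 1 := by
  have h1 : (1 : TensorSquare G) = tmul (x * y) (α x * α y) := by
    rw [← map_mul]; exact (hα (x * y)).symm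
  rw [tmul_rel₂ (x * y) (α x) (α y)] at h1
  rw [show ((α y)⁻¹ * (x * y) * α y) = ((α y)⁻¹ * x * α y) * ((α y)⁻¹ * y * α y) by group]
    at h1
  rw [tmul_rel₁ x y (α y),
    tmul_rel₁ ((α y)⁻¹ * x * α y) ((α y)⁻¹ * y * α y) ((α y)⁻¹ * α x * α y)] at h1
  rw [hα y, mul_one] at h1
  have h2 : tmul (((α y)⁻¹ * y * α y)⁻¹ * ((α y)⁻¹ * x * α y) * ((α y)⁻¹ * y * α y))
      (((α y)⁻¹ * y * α y)⁻¹ * ((α y)⁻¹ * α x * α y) * ((α y)⁻¹ * y * α y)) = 1 := by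
    have h3 := congrArg (tensorAct (y * α y)) (hα x)
    rw [tensorAct_tmul, map_one] at h3
    convert h3 using 2 <;> group
  rw [h2, one_mul] at h1
  rw [tensorAct_tmul y x (α y), tensorAct_tmul (α y) y (α x)]
  exact h1.symm

/-- If `x ⊗ x = 1` for all `x`, then the tensor is antisymmetric:
`(a ⊗ b) * (b ⊗ a) = 1`. -/
theorem tmul_mul_tmul_symm (hsq : ∀ x : G, tmul x x = 1) (a b : G) :
    tmul a b * tmul b a = 1 := by
  have h := key_identity (MulEquiv.refl G) (fun g => hsq g) a b
  simp only [MulEquiv.refl_apply] at h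
  rw [← map_mul] at h
  exact tensorAct_eq_one h

/-- If `x ⊗ x = 1` for all `x ∈ G` and `α` is a tensor commuting automorphism,
then `α ^ n` is a tensor commuting automorphism for every `n ≥ 0`. -/
theorem stmt_2 (G : Type*) [Group G] (hsq : ∀ x : G, tmul x x = 1)
    (α : G ≃* G) (hα : IsTensorCommuting α) (n : ℕ) :
    IsTensorCommuting (α ^ n) := by
  induction n using Nat.strong_induction_on with
  | _ n ih =>
    rcases n with _ | (_ | m)
    · intro g
      simpa using hsq g
    · intro g
      simpa [pow_one] using hα g
    · intro g
      have hk := key_identity α hα g ((α ^ (m + 1)) g)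
      have h2 : tmul ((α ^ (m + 1)) g) (α g) = 1 := by
        have hih : tmul (α g) ((α ^ m) (α g)) = 1 := ih m (by omega) (α g)
        have hanti := tmul_mul_tmul_symm hsq (α g) ((α ^ m) (α g))
        rw [hih, one_mul] at hanti
        rw [pow_succ, MulAut.mul_apply]
        exact hanti
      rw [h2, map_one, mul_one] at hk
      have h3 := tensorAct_eq_one hk
      rw [show (α ^ (m + 2)) g = α ((α ^ (m + 1)) g) from by
        rw [pow_succ', MulAut.mul_apply]]
      exact h3
end

section
/- Let G be a group and let α and β be tensor commuting automorphisms of G. Then the composite α ∘ β is a tensor commuting automorphism of G if and only if α(x) ⊗ β(x) = 1_⊗ for all x ∈ G. -/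
/-!
Non-abelian tensor square `G ⊗ G`, constructed as the presented group on
symbols `g ⊗ h` with the defining relations
`g*g' ⊗ h = (g^{g'} ⊗ h^{g'}) * (g' ⊗ h)` and
`g ⊗ h*h' = (g ⊗ h') * (g^{h'} ⊗ h^{h'})`, where `a ^ b = b⁻¹ * a * b`.
-/

variable {G : Type*} [Group G]

/-- The commutator homomorphism `G ⊗ G →* G`, `g ⊗ h ↦ g⁻¹h⁻¹gh`. -/
def tensorKappa : TensorSquare G →* G :=
  PresentedGroup.toGroup
    (f := fun p : G × G => p.1⁻¹ * p.2⁻¹ * p.1 * p.2)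
    (by
      rintro r (⟨g, g', h, rfl⟩ | ⟨g, h, h', rfl⟩) <;>
        simp only [map_mul, map_inv, FreeGroup.lift_apply_of, mul_inv_eq_one] <;> group)

@[simp] theorem tensorKappa_tmul (g h : G) :
    tensorKappa (tmul g h) = g⁻¹ * h⁻¹ * g * h :=
  PresentedGroup.toGroup.of _

theorem comm_of_tmul_eq_one {g h : G} (h1 : tmul g h = 1) : g * h = h * g := by
  have h2 := congrArg tensorKappa h1
  rw [tensorKappa_tmul, map_one] at h2
  have : g * h = (h * g) * (g⁻¹ * h⁻¹ * g * h) := by group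
  rw [this, h2, mul_one]

/-- The swap homomorphism `G ⊗ G →* G ⊗ G`, `g ⊗ h ↦ (h ⊗ g)⁻¹`. -/
def tensorSwap : TensorSquare G →* TensorSquare G :=
  PresentedGroup.toGroup
    (f := fun p : G × G => (tmul p.2 p.1)⁻¹)
    (by
      rintro r (⟨g, g', h, rfl⟩ | ⟨g, h, h', rfl⟩) <;>
        simp only [map_mul, map_inv, FreeGroup.lift_apply_of, mul_inv_eq_one, inv_inv,
          mul_inv_rev]
      · rw [← tmul_rel₂ h g g', inv_mul_cancel]
      · rw [← tmul_rel₁ h h' g, inv_mul_cancel])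

@[simp] theorem tensorSwap_tmul (g h : G) :
    tensorSwap (tmul g h) = (tmul h g)⁻¹ :=
  PresentedGroup.toGroup.of _

theorem tmul_swap_eq_one {g h : G} (h1 : tmul g h = 1) : tmul h g = 1 := by
  have h2 := congrArg tensorSwap h1
  rw [tensorSwap_tmul, map_one, inv_eq_one] at h2
  exact h2

private lemma conj_eq_self {a b : G} (h : a * b = b * a) : b⁻¹ * a * b = a := by
  rw [mul_assoc, h, ← mul_assoc, inv_mul_cancel, one_mul]

/-- Key lemma: if `α` is tensor commuting, `u` commutes with `v` and `u ⊗ α v = 1`,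
then `v ⊗ α u = 1`. -/
theorem key {α : G ≃* G} (hα : IsTensorCommuting α) {u v : G}
    (huv : u * v = v * u) (h1 : tmul u (α v) = 1) : tmul v (α u) = 1 := by
  have hcv : v * α v = α v * v := comm_of_tmul_eq_one (hα v)
  have hcu : u * α v = α v * u := comm_of_tmul_eq_one h1
  have e1 : (α v)⁻¹ * (u * v) * (α v) = u * v := by
    apply conj_eq_self
    rw [mul_assoc, hcv, ← mul_assoc, hcu, mul_assoc]
  have e2 : (α v)⁻¹ * (α u) * (α v) = α u := by
    have : v⁻¹ * u * v = u := conj_eq_self huv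
    calc (α v)⁻¹ * (α u) * (α v) = α (v⁻¹ * u * v) := by
          simp [map_mul, map_inv]
      _ = α u := by rw [this]
  have main := hα (u * v)
  rw [map_mul, tmul_rel₂ (u * v) (α u) (α v), e1, e2,
    tmul_rel₁ u v (α v), ← tensorAct_tmul, h1, map_one, hα v, mul_one, one_mul,
    tmul_rel₁ u v (α u), ← tensorAct_tmul, hα u, map_one, one_mul] at main
  exact main

/-- If `α, β` are tensor commuting automorphisms of `G`, then `α ∘ β` is tensor commuting
iff `α x ⊗ β x = 1` for all `x ∈ G`. -/
theorem stmt_5 (G : Type*) [Group G] (α β : G ≃* G)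
    (hα : IsTensorCommuting α) (hβ : IsTensorCommuting β) :
    IsTensorCommuting (α * β) ↔ ∀ x : G, tmul (α x) (β x) = 1 := by
  constructor
  · intro h x
    have huv : x * β x = β x * x := comm_of_tmul_eq_one (hβ x)
    have h1 : tmul x (α (β x)) = 1 := h x
    exact tmul_swap_eq_one (key hα huv h1)
  · intro h x
    have huv : β x * x = x * β x := (comm_of_tmul_eq_one (hβ x)).symm
    have h1 : tmul (β x) (α x) = 1 := tmul_swap_eq_one (h x)
    exact key hα huv h1
end

section
/- Let G be a group such that x ⊗ x = 1_⊗ for all x ∈ G. Assume that (1) for all tensor commuting automorphisms α and β of G, the commutator automorphism α⁻¹β⁻¹αβ is a tensor central automorphism of G, and (2) for every automorphism α of G and every x ∈ G, if α(x) ⊗ x = x ⊗ α(x) then x ⊗ α(x) = 1_⊗. Then the set A^⊗(G) of tensor commuting automorphisms of G is a subgroup of Aut(G). -/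
/-!
Non-abelian tensor square `G ⊗ G`, constructed as the presented group on
symbols `g ⊗ h` with the defining relations
`g*g' ⊗ h = (g^{g'} ⊗ h^{g'}) * (g' ⊗ h)` and
`g ⊗ h*h' = (g ⊗ h') * (g^{h'} ⊗ h^{h'})`, where `a ^ b = b⁻¹ * a * b`.
-/

variable {G : Type*} [Group G]

section AuxTensor

variable {G : Type*} [Group G]

private theorem tmul_one_right' (g : G) : tmul g (1 : G) = 1 := by
  have h := tmul_rel₂ g 1 1
  simp only [one_mul, mul_one, inv_one] at h
  exact (left_eq_mul.mp h)

/-- The commutator homomorphism `κ : G ⊗ G → G`, `g ⊗ h ↦ [g,h] = g⁻¹h⁻¹gh`. -/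
private def kappaHom (G : Type*) [Group G] : TensorSquare G →* G :=
  PresentedGroup.toGroup
    (f := fun p : G × G => p.1⁻¹ * p.2⁻¹ * p.1 * p.2)
    (by
      rintro r (⟨g, g', h, rfl⟩ | ⟨g, h, h', rfl⟩) <;>
        simp only [map_mul, map_inv, FreeGroup.lift_apply_of, mul_inv_eq_one] <;>
        group)

private theorem kappaHom_tmul (g h : G) :
    kappaHom G (tmul g h) = g⁻¹ * h⁻¹ * g * h :=
  PresentedGroup.toGroup.of _

private theorem mul_comm_of_tmul_eq_one {a b : G} (h : tmul a b = 1) : a * b = b * a := by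
  have e : a⁻¹ * b⁻¹ * a * b = 1 := by
    have h2 := congrArg (kappaHom G) h
    rwa [kappaHom_tmul, map_one] at h2
  have e2 := congrArg (fun w => b * (a * w)) e
  simpa [mul_assoc] using e2

private theorem conj_eq_of_tmul_eq_one {w a : G} (h : tmul w a = 1) : w⁻¹ * a * w = a := by
  have hc := mul_comm_of_tmul_eq_one h
  calc w⁻¹ * a * w = w⁻¹ * (a * w) := by rw [mul_assoc]
    _ = w⁻¹ * (w * a) := by rw [← hc]
    _ = a := inv_mul_cancel_left w a

private theorem tensorAct_fixed {w a b : G} (ha : tmul w a = 1) (hb : tmul w b = 1) :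
    tensorAct w (tmul a b) = tmul a b := by
  rw [tensorAct_tmul, conj_eq_of_tmul_eq_one ha, conj_eq_of_tmul_eq_one hb]

/-- Antisymmetry: from `x ⊗ x = 1` we get `(a ⊗ b)(b ⊗ a) = 1`. -/
private theorem tmul_swap_mul (hsq : ∀ x : G, tmul x x = 1) (c b : G) :
    tmul c b * tmul b c = 1 := by
  have aux : ∀ a : G, tmul (b⁻¹ * a * b) b * tmul b (b⁻¹ * a * b) = 1 := by
    intro a
    have e0 : tmul (a * b) (a * b) = 1 := hsq _
    have e1 := tmul_rel₁ a b (a * b)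
    have e2 := tmul_rel₂ b a b
    have e3 := tmul_rel₂ (b⁻¹ * a * b) (b⁻¹ * a * b) b
    rw [hsq b, one_mul] at e2
    have hb : b⁻¹ * b * b = b := by group
    rw [hb] at e2
    have harg : b⁻¹ * (a * b) * b = b⁻¹ * a * b * b := by group
    rw [harg] at e1
    rw [hsq, mul_one] at e3
    rw [e3, e2, e0] at e1
    exact e1.symm
  have h0 := aux (b * c * b⁻¹)
  have hc : b⁻¹ * (b * c * b⁻¹) * b = c := by group
  rwa [hc] at h0

private theorem tmul_swap_eq_inv (hsq : ∀ x : G, tmul x x = 1) (a b : G) :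
    tmul b a = (tmul a b)⁻¹ :=
  eq_inv_of_mul_eq_one_right (tmul_swap_mul hsq a b)

private theorem tmul_swap_eq_one_s16 (hsq : ∀ x : G, tmul x x = 1) {a b : G}
    (h : tmul a b = 1) : tmul b a = 1 := by
  rw [tmul_swap_eq_inv hsq a b, h, inv_one]

/-- Functoriality: `φ ⊗ φ` on the tensor square. -/
private def tensorMapHom (φ : G ≃* G) : TensorSquare G →* TensorSquare G :=
  PresentedGroup.toGroup
    (f := fun p : G × G => tmul (φ p.1) (φ p.2))
    (by
      rintro r (⟨g, g', h, rfl⟩ | ⟨g, h, h', rfl⟩) <;>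
        simp only [map_mul, map_inv, FreeGroup.lift_apply_of, mul_inv_eq_one]
      · exact tmul_rel₁ (φ g) (φ g') (φ h)
      · exact tmul_rel₂ (φ g) (φ h) (φ h'))

private theorem tensorMapHom_tmul (φ : G ≃* G) (g h : G) :
    tensorMapHom φ (tmul g h) = tmul (φ g) (φ h) :=
  PresentedGroup.toGroup.of _

private theorem tensorMapHom_tensorAct (φ : G ≃* G) (w : G) (u : TensorSquare G) :
    tensorMapHom φ (tensorAct w u) = tensorAct (φ w) (tensorMapHom φ u) := by
  have h : (tensorMapHom φ).comp (tensorAct w) = (tensorAct (φ w)).comp (tensorMapHom φ) :=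
    PresentedGroup.ext fun p => by
      obtain ⟨g, h⟩ := p
      show tensorMapHom φ (tensorAct w (tmul g h)) = tensorAct (φ w) (tensorMapHom φ (tmul g h))
      rw [tensorAct_tmul, tensorMapHom_tmul, tensorMapHom_tmul, tensorAct_tmul]
      simp only [map_mul, map_inv]
  exact DFunLike.congr_fun h u

private theorem tmul_map_eq_one (φ : G ≃* G) {z : G} (hz : ∀ y : G, tmul z y = 1) :
    ∀ y : G, tmul (φ z) y = 1 := by
  intro y
  have h := congrArg (tensorMapHom φ) (hz (φ.symm y))
  rwa [tensorMapHom_tmul, map_one, MulEquiv.apply_symm_apply] at h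

private theorem tmul_absorb_left {z : G} (hz : ∀ y : G, tmul z y = 1) (a b : G) :
    tmul (a * z) b = tmul a b := by
  have e := tmul_rel₁ a z b
  rw [hz b, mul_one, conj_eq_of_tmul_eq_one (hz a), conj_eq_of_tmul_eq_one (hz b)] at e
  exact e

private theorem tmul_absorb_right (hsq : ∀ x : G, tmul x x = 1) {z : G}
    (hz : ∀ y : G, tmul z y = 1) (a b : G) :
    tmul a (b * z) = tmul a b := by
  have e := tmul_rel₂ a b z
  rw [tmul_swap_eq_one_s16 hsq (hz a), one_mul, conj_eq_of_tmul_eq_one (hz a),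
    conj_eq_of_tmul_eq_one (hz b)] at e
  exact e

/-- `στ(x) = τσ(x) · ω` with `ω` in the tensor center, when `[σ,τ]` is tensor central. -/
private theorem pq_decomp {σ τ : G ≃* G}
    (hc : IsTensorCentral (σ⁻¹ * τ⁻¹ * σ * τ)) (x : G) :
    ∃ ω : G, σ (τ x) = τ (σ x) * ω ∧ ∀ y : G, tmul ω y = 1 := by
  set z := x⁻¹ * (σ⁻¹ * τ⁻¹ * σ * τ) x with hzdef
  refine ⟨τ (σ z), ?_, tmul_map_eq_one τ (tmul_map_eq_one σ (fun y => hc x y))⟩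
  have hxz : x * z = (σ⁻¹ * τ⁻¹ * σ * τ) x := by
    rw [hzdef]; exact mul_inv_cancel_left x _
  rw [← map_mul, ← map_mul, hxz]
  simp [MulAut.mul_apply, MulAut.apply_inv_self]

private theorem tc_L1 {σ τ : G ≃* G} (hsq : ∀ x : G, tmul x x = 1)
    (hτ : IsTensorCommuting τ) (x : G) :
    tmul (σ (τ x)) (σ x) = 1 := by
  have h : tmul (τ x) x = 1 := tmul_swap_eq_one_s16 hsq (hτ x)
  have h2 := congrArg (tensorMapHom σ) h
  rwa [tensorMapHom_tmul, map_one] at h2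

private theorem tc_L2 {σ τ : G ≃* G} (hsq : ∀ x : G, tmul x x = 1)
    (hσ : IsTensorCommuting σ) (hc : IsTensorCentral (σ⁻¹ * τ⁻¹ * σ * τ)) (x : G) :
    tmul (σ (τ x)) (τ x) = 1 := by
  obtain ⟨ω, hEq, hω⟩ := pq_decomp hc x
  rw [hEq, tmul_absorb_left hω]
  exact tc_L1 (σ := τ) (τ := σ) hsq hσ x

private theorem tc_L3 {σ τ : G ≃* G} (hsq : ∀ x : G, tmul x x = 1)
    (hc : IsTensorCentral (σ⁻¹ * τ⁻¹ * σ * τ)) (x : G) :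
    tmul x (σ (τ x)) = tmul x (τ (σ x)) := by
  obtain ⟨ω, hEq, hω⟩ := pq_decomp hc x
  rw [hEq, tmul_absorb_right hsq hω]

/-- Expansion identity for a tensor commuting automorphism. -/
private theorem star_id {σ : G ≃* G} (hσ : IsTensorCommuting σ) (g h : G) :
    tensorAct h (tmul g (σ h)) * tensorAct (σ h) (tmul h (σ g)) = 1 := by
  have e0 : tmul (g * h) (σ g * σ h) = 1 := by rw [← map_mul]; exact hσ (g * h)
  have e1 := tmul_rel₂ (g * h) (σ g) (σ h)
  have e2 := tmul_rel₁ g h (σ h)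
  have e3 := tmul_rel₁ g h (σ g)
  rw [hσ h, mul_one] at e2
  have hA : tmul (h⁻¹ * g * h) (h⁻¹ * σ g * h) = 1 := by
    rw [← tensorAct_tmul, hσ g, map_one]
  rw [hA, one_mul] at e3
  rw [← e3, tensorAct_tmul, tensorAct_tmul, ← e2, ← e1]
  exact e0

private theorem key1 {σ τ : G ≃* G} (hsq : ∀ x : G, tmul x x = 1)
    (hσ : IsTensorCommuting σ) (hτ : IsTensorCommuting τ)
    (hc : IsTensorCentral (σ⁻¹ * τ⁻¹ * σ * τ)) (x : G) :
    tensorAct (τ x) (tmul x (σ (τ x))) = tmul (σ x) (τ x) := by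
  have st := star_id hσ x (τ x)
  rw [tmul_swap_eq_inv hsq (σ x) (τ x), map_inv,
    tensorAct_fixed (tc_L1 hsq hτ x) (tc_L2 hsq hσ hc x)] at st
  exact mul_inv_eq_one.mp st

private theorem isTC_inv (hsq : ∀ x : G, tmul x x = 1) {σ : G ≃* G}
    (hσ : IsTensorCommuting σ) : IsTensorCommuting σ⁻¹ := by
  intro g
  have h := hσ (σ⁻¹ g)
  rw [MulAut.apply_inv_self] at h
  exact tmul_swap_eq_one_s16 hsq h

private theorem isTC_mul (hsq : ∀ x : G, tmul x x = 1)
    (h1 : ∀ α β : G ≃* G, IsTensorCommuting α → IsTensorCommuting β →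
      IsTensorCentral (α⁻¹ * β⁻¹ * α * β))
    (h2 : ∀ (α : G ≃* G) (x : G), tmul (α x) x = tmul x (α x) → tmul x (α x) = 1)
    {σ τ : G ≃* G} (hσ : IsTensorCommuting σ) (hτ : IsTensorCommuting τ) :
    IsTensorCommuting (σ * τ) := by
  intro x
  have hσ' := isTC_inv hsq hσ
  have hτ' := isTC_inv hsq hτ
  -- first bridge: pair (σ⁻¹, τ), pushed forward by σ ⊗ σ
  have k1 := key1 hsq hσ' hτ (h1 σ⁻¹ τ hσ' hτ) x
  have E1 := congrArg (tensorMapHom σ) k1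
  rw [tensorMapHom_tensorAct, tensorMapHom_tmul, tensorMapHom_tmul,
    MulAut.apply_inv_self, MulAut.apply_inv_self,
    tensorAct_fixed (tc_L1 hsq hτ x) (tc_L2 hsq hσ (h1 σ τ hσ hτ) x)] at E1
  -- E1 : tmul (σ x) (τ x) = tmul x (σ (τ x))
  -- second bridge: pair (τ⁻¹, σ), pushed forward by τ ⊗ τ
  have k2 := key1 hsq hτ' hσ (h1 τ⁻¹ σ hτ' hσ) x
  have E2 := congrArg (tensorMapHom τ) k2
  rw [tensorMapHom_tensorAct, tensorMapHom_tmul, tensorMapHom_tmul,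
    MulAut.apply_inv_self, MulAut.apply_inv_self,
    tensorAct_fixed (tc_L1 hsq hσ x) (tc_L2 hsq hτ (h1 τ σ hτ hσ) x)] at E2
  -- E2 : tmul (τ x) (σ x) = tmul x (τ (σ x))
  rw [← tc_L3 hsq (h1 σ τ hσ hτ) x] at E2
  -- E2 : tmul (τ x) (σ x) = tmul x (σ (τ x))
  have hinv := tmul_swap_eq_inv hsq (σ x) (τ x)
  have hs : (tmul x (σ (τ x)))⁻¹ = tmul x (σ (τ x)) := by
    rw [← E1, ← hinv, E2]
    exact E1.symm
  have hyp : tmul ((σ * τ) x) x = tmul x ((σ * τ) x) := by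
    rw [MulAut.mul_apply, tmul_swap_eq_inv hsq x (σ (τ x))]
    exact hs
  exact h2 (σ * τ) x hyp

end AuxTensor

/-- Suppose `x ⊗ x = 1` for all `x ∈ G`, every commutator of two tensor commuting
automorphisms is tensor central, and for every automorphism `α` and `x ∈ G`,
`α x ⊗ x = x ⊗ α x` implies `x ⊗ α x = 1`. Then the set of tensor commuting
automorphisms of `G` is a subgroup of `Aut G`. -/
theorem stmt_16 (G : Type*) [Group G] (hsq : ∀ x : G, tmul x x = 1)
    (h1 : ∀ α β : G ≃* G, IsTensorCommuting α → IsTensorCommuting β →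
      IsTensorCentral (α⁻¹ * β⁻¹ * α * β))
    (h2 : ∀ (α : G ≃* G) (x : G), tmul (α x) x = tmul x (α x) → tmul x (α x) = 1) :
    ∃ S : Subgroup (G ≃* G), (S : Set (G ≃* G)) = {α : G ≃* G | IsTensorCommuting α} := by
  refine ⟨{ carrier := {α : G ≃* G | IsTensorCommuting α},
            mul_mem' := fun ha hb => isTC_mul hsq h1 h2 ha hb,
            one_mem' := fun g => by simpa [MulAut.one_apply] using hsq g,
            inv_mem' := fun ha => isTC_inv hsq ha }, rfl⟩
end
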